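/- Let k be a field of characteristic not two, α, β ∈ k*. The imaginary part Span⟨i, j, ij⟩ of the quaternion algebra (α,β / k), equipped with the commutator bracket, is a Lie algebra isomorphic to L(−β, −α). -/

import Mathlib

open Quaternion

def Lbracket {k : Type*} [Field k] (α β : k) (u v : Fin 3 → k) : Fin 3 → k :=
  ![α * (u 1 * v 2 - u 2 * v 1), β * (u 2 * v 0 - u 0 * v 2), u 0 * v 1 - u 1 * v 0]

def emap (k : Type*) [Field k] (α β : k) : (Fin 3 → k) →ₗ[k] ℍ[k, α, β] where
  toFun u := ⟨0, u 0 / 2, u 1 / 2, u 2 / 2⟩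
  map_add' u v := by ext <;> simp <;> ring
  map_smul' c u := by ext <;> simp <;> ring

theorem im_quaternion_iso_L (k : Type*) [Field k] (hchar : (2 : k) ≠ 0) (α β : k)
    (hα : α ≠ 0) (hβ : β ≠ 0) :
    ∃ e : (Fin 3 → k) →ₗ[k] ℍ[k, α, β],
      Function.Injective e ∧
      LinearMap.range e = Submodule.span k
        { (⟨0,1,0,0⟩ : ℍ[k, α, β]), ⟨0,0,1,0⟩, (⟨0,1,0,0⟩ : ℍ[k, α, β]) * ⟨0,0,1,0⟩ } ∧
      ∀ u v : Fin 3 → k,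
        e (Lbracket (-β) (-α) u v) = e u * e v - e v * e u := by
  refine ⟨emap k α β, ?_, ?_, ?_⟩
  · intro u v h
    simp only [emap, LinearMap.coe_mk, AddHom.coe_mk, QuaternionAlgebra.mk.injEq] at h
    funext i
    have h2 : ∀ a b : k, a / 2 = b / 2 → a = b := fun a b hab =>
      mul_right_cancel₀ (inv_ne_zero hchar) (by simpa [div_eq_mul_inv] using hab)
    fin_cases i
    · exact h2 _ _ h.2.1
    · exact h2 _ _ h.2.2.1
    · exact h2 _ _ h.2.2.2
  · have hij : (⟨0,1,0,0⟩ : ℍ[k, α, β]) * ⟨0,0,1,0⟩ = ⟨0,0,0,1⟩ := by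
      ext <;> simp
    rw [hij]
    apply le_antisymm
    · rintro x ⟨u, rfl⟩
      have hx : emap k α β u = (u 0 / 2) • (⟨0,1,0,0⟩ : ℍ[k, α, β]) + (u 1 / 2) • ⟨0,0,1,0⟩
          + (u 2 / 2) • ⟨0,0,0,1⟩ := by
        ext <;> simp [emap]
      rw [hx]
      refine Submodule.add_mem _ (Submodule.add_mem _ ?_ ?_) ?_ <;>
        exact Submodule.smul_mem _ _ (Submodule.subset_span (by simp))
    · rw [Submodule.span_le]
      rintro x (rfl | rfl | rfl)
      · exact ⟨![2,0,0], by ext <;> simp [emap, div_self hchar]⟩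
      · exact ⟨![0,2,0], by ext <;> simp [emap, div_self hchar]⟩
      · exact ⟨![0,0,2], by ext <;> simp [emap, div_self hchar]⟩
  · intro u v
    ext <;>
      simp [emap, Lbracket, QuaternionAlgebra.re_mul, QuaternionAlgebra.imI_mul,
        QuaternionAlgebra.imJ_mul, QuaternionAlgebra.imK_mul, Fin.isValue,
        Matrix.cons_val_zero, Matrix.cons_val_one, Matrix.head_cons] <;>
      field_simp <;> ring
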